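/- If the Radon–Nikodym derivative dP_θ/dQ_θ is 𝒟-measurable and equal to a single random variable L not depending on θ, then for all θ, θ' one has ν(dP_θ/dν | 𝒟) · ν(dQ_θ'/dν | 𝒟) = ν(dQ_θ/dν | 𝒟) · ν(dP_θ'/dν | 𝒟) almost surely (everywhere equivalence of the likelihood ratios). -/
import Mathlib

open MeasureTheory

/-- **Ignorability lemma, everywhere version.** If the Radon–Nikodym derivative
`dP_θ/dQ_θ` is `𝒟`-measurable and equal to a single random variable `L` not depending
on `θ`, then for all `θ, θ'`,
`ν(dP_θ/dν | 𝒟) · ν(dQ_θ'/dν | 𝒟) = ν(dQ_θ/dν | 𝒟) · ν(dP_θ'/dν | 𝒟)` `ν`-a.s.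
(everywhere equivalence of the likelihood ratios). -/
theorem everywhere_equivalent_of_measurable_likelihood_ratio
    {Ω Θ : Type*} {mΩ : MeasurableSpace Ω} (ν : Measure Ω) [SigmaFinite ν]
    (P Q : Θ → Measure Ω) [∀ θ, IsProbabilityMeasure (P θ)]
    [∀ θ, IsProbabilityMeasure (Q θ)]
    (hPν : ∀ θ, P θ ≪ ν) (hQν : ∀ θ, Q θ ≪ ν) (hPQ : ∀ θ, P θ ≪ Q θ)
    (𝒟 : MeasurableSpace Ω) (h𝒟 : 𝒟 ≤ mΩ) [SigmaFinite (ν.trim h𝒟)]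
    (L : Ω → ℝ) (hL : Measurable[𝒟] L)
    (hconst : ∀ θ, (fun ω => ((P θ).rnDeriv (Q θ) ω).toReal) =ᵐ[ν] L) :
    ∀ θ θ', ∀ᵐ ω ∂ν,
      (ν[fun ω => ((P θ).rnDeriv ν ω).toReal | 𝒟]) ω *
        (ν[fun ω => ((Q θ').rnDeriv ν ω).toReal | 𝒟]) ω =
      (ν[fun ω => ((Q θ).rnDeriv ν ω).toReal | 𝒟]) ω *
        (ν[fun ω => ((P θ').rnDeriv ν ω).toReal | 𝒟]) ω := by
  have key : ∀ θ, (ν[fun ω => ((P θ).rnDeriv ν ω).toReal | 𝒟]) =ᵐ[ν]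
      fun ω => L ω * (ν[fun ω => ((Q θ).rnDeriv ν ω).toReal | 𝒟]) ω := by
    intro θ
    have hmul := Measure.rnDeriv_mul_rnDeriv (μ := P θ) (ν := Q θ) (κ := ν) (hPQ θ)
    have h1 : (fun ω => ((P θ).rnDeriv ν ω).toReal) =ᵐ[ν]
        L * fun ω => ((Q θ).rnDeriv ν ω).toReal := by
      filter_upwards [hmul, hconst θ] with ω hω hLω
      simp only [Pi.mul_apply] at hω ⊢
      rw [← hω, ENNReal.toReal_mul, hLω]
    have hQint : Integrable (fun ω => ((Q θ).rnDeriv ν ω).toReal) ν :=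
      Measure.integrable_toReal_rnDeriv
    have hPint : Integrable (fun ω => ((P θ).rnDeriv ν ω).toReal) ν :=
      Measure.integrable_toReal_rnDeriv
    have hLQint : Integrable (L * fun ω => ((Q θ).rnDeriv ν ω).toReal) ν :=
      hPint.congr h1
    calc (ν[fun ω => ((P θ).rnDeriv ν ω).toReal | 𝒟])
        =ᵐ[ν] (ν[L * fun ω => ((Q θ).rnDeriv ν ω).toReal | 𝒟]) := condExp_congr_ae h1
      _ =ᵐ[ν] L * (ν[fun ω => ((Q θ).rnDeriv ν ω).toReal | 𝒟]) :=
          condExp_mul_of_stronglyMeasurable_left hL.stronglyMeasurable hLQint hQint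
  intro θ θ'
  filter_upwards [key θ, key θ'] with ω h1 h2
  rw [h1, h2]
  ring
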